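/- arXiv:2602.01260 — 3 statements merged into one kernel-verified Lean document; each statement's English description precedes it below -/
import Mathlib

section
/- Let k be a positive semidefinite kernel on a set S, let x_1, …, x_t ∈ S and σ > 0, and define K_t, k_t(s), σ_t²(s) and the posterior mean μ_t as in the context. Suppose f : S → ℝ lies in the span of kernel sections with bounded kernel norm: f(x) = Σ_{j=1}^{m} α_j k(x, z_j) for some points z_1,…,z_m ∈ S and coefficients α ∈ ℝ^m with Σ_{i,j} α_i α_j k(z_i, z_j) ≤ B². If the observation vector is noiseless, y_i = f(x_i) for i = 1,…,t, then for every x ∈ S, | f(x) − μ_t(x) | ≤ B · √(σ_t²(x)). -/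
open Matrix

open scoped MatrixOrder in
lemma psd_cs {n : Type*} [Fintype n] [DecidableEq n] {G : Matrix n n ℝ} (hG : G.PosSemidef)
    (a b : n → ℝ) : (a ⬝ᵥ G *ᵥ b) ^ 2 ≤ (a ⬝ᵥ G *ᵥ a) * (b ⬝ᵥ G *ᵥ b) := by
  set Q := CFC.sqrt G with hQ
  have hQQ : Q * Q = G := CFC.sqrt_mul_sqrt_self G hG.nonneg
  have hQs : Qᵀ = Q := by
    have := (CFC.sqrt_nonneg G).posSemidef.isHermitian
    rwa [Matrix.IsHermitian, Matrix.conjTranspose_eq_transpose_of_trivial] at this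
  have key : ∀ u v : n → ℝ, u ⬝ᵥ G *ᵥ v = (Q *ᵥ u) ⬝ᵥ (Q *ᵥ v) := by
    intro u v
    rw [← hQQ, ← Matrix.mulVec_mulVec, Matrix.dotProduct_mulVec]
    rw [← Matrix.mulVec_transpose, hQs]
  rw [key a b, key a a, key b b]
  simpa [dotProduct, pow_two] using
    Finset.sum_mul_sq_le_sq_mul_sq Finset.univ (Q *ᵥ a) (Q *ᵥ b)

lemma psd_nonneg {n : Type*} [Fintype n] {G : Matrix n n ℝ} (hG : G.PosSemidef)
    (a : n → ℝ) : 0 ≤ a ⬝ᵥ G *ᵥ a := by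
  simpa using hG.dotProduct_mulVec_nonneg a



/-- A symmetric positive semidefinite kernel on a set `S`: symmetric, and every finite
Gram matrix is positive semidefinite. -/
def IsPSDKernel {S : Type*} (k : S → S → ℝ) : Prop :=
  (∀ x y, k x y = k y x) ∧
    ∀ (n : ℕ) (x : Fin n → S), (Matrix.of fun i j => k (x i) (x j)).PosSemidef

/-- Regularized Gram matrix `K_t + σ² I`. -/
noncomputable def gramReg {S : Type*} (k : S → S → ℝ) (σ : ℝ) {t : ℕ}
    (x : Fin t → S) : Matrix (Fin t) (Fin t) ℝ :=
  (Matrix.of fun i j => k (x i) (x j)) + σ ^ 2 • (1 : Matrix (Fin t) (Fin t) ℝ)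

/-- Kernel vector `k_t(s) = (k(s,x_1),…,k(s,x_t))ᵀ`. -/
noncomputable def kvec {S : Type*} (k : S → S → ℝ) {t : ℕ} (x : Fin t → S) (s : S) :
    Fin t → ℝ :=
  fun i => k s (x i)

/-- GP posterior variance `σ_t²(s) = k(s,s) − k_t(s)ᵀ(K_t+σ²I)⁻¹k_t(s)`. -/
noncomputable def postVar {S : Type*} (k : S → S → ℝ) (σ : ℝ) {t : ℕ}
    (x : Fin t → S) (s : S) : ℝ :=
  k s s - kvec k x s ⬝ᵥ ((gramReg k σ x)⁻¹ *ᵥ kvec k x s)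

/-- GP posterior mean `μ_t(s) = k_t(s)ᵀ(K_t+σ²I)⁻¹ y` for targets `y`. -/
noncomputable def postMean {S : Type*} (k : S → S → ℝ) (σ : ℝ) {t : ℕ}
    (x : Fin t → S) (y : Fin t → ℝ) (s : S) : ℝ :=
  kvec k x s ⬝ᵥ ((gramReg k σ x)⁻¹ *ᵥ y)

/-- Noiseless GP posterior mean error bound: if `f` is a finite
combination of kernel sections with kernel norm at most `B` and the targets are
noiseless observations of `f`, then `|f(x) − μ_t(x)| ≤ B·√(σ_t²(x))`. -/
theorem stmt15 {S : Type*} (k : S → S → ℝ) (hk : IsPSDKernel k)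
    (σ : ℝ) (hσ : 0 < σ) (t : ℕ) (x : Fin t → S)
    (f : S → ℝ) (m : ℕ) (z : Fin m → S) (α : Fin m → ℝ) (B : ℝ) (hB : 0 ≤ B)
    (hf : ∀ s : S, f s = ∑ j : Fin m, α j * k s (z j))
    (hnorm : ∑ i : Fin m, ∑ j : Fin m, α i * α j * k (z i) (z j) ≤ B ^ 2)
    (y : Fin t → ℝ) (hy : ∀ i, y i = f (x i)) :
    ∀ s : S, |f s - postMean k σ x y s| ≤ B * Real.sqrt (postVar k σ x s) := by
  obtain ⟨hk1, hk2⟩ := hk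
  intro s
  simp only [postMean, postVar]
  -- positivity of the regularizer
  have hsm : (σ ^ 2 • (1 : Matrix (Fin t) (Fin t) ℝ)).PosDef := by
    refine Matrix.PosDef.of_dotProduct_mulVec_pos ?_ fun v hv => ?_
    · simp [Matrix.IsHermitian]
    · have h1 : (0:ℝ) < v ⬝ᵥ v := by
        have := Matrix.dotProduct_self_star_pos_iff (v := v) |>.mpr hv
        simpa using this
      have : star v ⬝ᵥ (σ ^ 2 • (1 : Matrix (Fin t) (Fin t) ℝ)) *ᵥ v = σ^2 * (v ⬝ᵥ v) := by
        simp [Matrix.smul_mulVec, Matrix.one_mulVec, dotProduct_smul, smul_eq_mul]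
      rw [this]
      positivity
  have hreg : (gramReg k σ x).PosDef := Matrix.PosDef.posSemidef_add (hk2 t x) hsm
  have hdet : IsUnit (gramReg k σ x).det := hreg.det_pos.ne'.isUnit
  have hsymK : ∀ i j, k (x i) (x j) = k (x j) (x i) := fun i j => hk1 _ _
  have hsymG : (gramReg k σ x)ᵀ = gramReg k σ x := by
    have := hreg.isHermitian
    rwa [Matrix.IsHermitian, Matrix.conjTranspose_eq_transpose_of_trivial] at this
  set κ : Fin t → ℝ := kvec k x s with hκdef
  have hκ : κ = fun i => k s (x i) := rfl
  set w : Fin t → ℝ := (gramReg k σ x)⁻¹ *ᵥ κ with hwdef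
  -- gramReg *ᵥ w = κ
  have hGw : gramReg k σ x *ᵥ w = κ := by
    rw [hwdef, Matrix.mulVec_mulVec, Matrix.mul_nonsing_inv _ hdet, Matrix.one_mulVec]
  -- posterior mean equals w ⬝ᵥ y
  have hmean : κ ⬝ᵥ ((gramReg k σ x)⁻¹ *ᵥ y) = w ⬝ᵥ y := by
    rw [Matrix.dotProduct_mulVec, ← Matrix.mulVec_transpose, Matrix.transpose_nonsing_inv, hsymG,
      ← hwdef]
  -- combined index type and Gram matrix
  set u : Fin t ⊕ Fin m ⊕ Unit → S := Sum.elim x (Sum.elim z fun _ => s) with hu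
  set G : Matrix (Fin t ⊕ Fin m ⊕ Unit) (Fin t ⊕ Fin m ⊕ Unit) ℝ :=
    Matrix.of fun i j => k (u i) (u j) with hG
  have hGpsd : G.PosSemidef := by
    have e := Fintype.equivFin (Fin t ⊕ Fin m ⊕ Unit)
    have : G = (Matrix.of fun i j =>
        k ((u ∘ e.symm) i) ((u ∘ e.symm) j)).submatrix e e := by
      ext i j; simp [hG]
    rw [this]
    exact (hk2 _ (u ∘ e.symm)).submatrix e
  set a : Fin t ⊕ Fin m ⊕ Unit → ℝ := Sum.elim 0 (Sum.elim α 0) with ha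
  set b : Fin t ⊕ Fin m ⊕ Unit → ℝ := Sum.elim (-w) (Sum.elim 0 fun _ => 1) with hb
  have haa : a ⬝ᵥ G *ᵥ a = ∑ i : Fin m, ∑ j : Fin m, α i * α j * k (z i) (z j) := by
    simp only [dotProduct, mulVec, hG, ha, hu, Fintype.sum_sum_type, Matrix.of_apply,
      Sum.elim_inl, Sum.elim_inr, Pi.zero_apply, zero_mul, mul_zero, Finset.sum_const_zero,
      add_zero, zero_add, Finset.univ_unique, Finset.sum_singleton]
    refine Finset.sum_congr rfl fun i _ => ?_
    rw [Finset.mul_sum]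
    exact Finset.sum_congr rfl fun j _ => by ring
  have hab : a ⬝ᵥ G *ᵥ b = f s - w ⬝ᵥ y := by
    simp only [dotProduct, mulVec, hG, ha, hb, hu, Fintype.sum_sum_type, Matrix.of_apply,
      Sum.elim_inl, Sum.elim_inr, Pi.zero_apply, Pi.neg_apply, zero_mul, mul_zero,
      Finset.sum_const_zero, add_zero, zero_add, Finset.univ_unique, Finset.sum_singleton,
      mul_one, mul_neg]
    rw [hf s]
    have hyy : ∀ i, w i * y i = ∑ j : Fin m, α j * (k (z j) (x i) * w i) := by
      intro i
      rw [hy i, hf, Finset.mul_sum]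
      exact Finset.sum_congr rfl fun j _ => by rw [hk1 (x i) (z j)]; ring
    simp_rw [hyy]
    rw [Finset.sum_comm]
    rw [← Finset.sum_sub_distrib]
    refine Finset.sum_congr rfl fun j _ => ?_
    rw [hk1 s (z j), mul_add, Finset.mul_sum]
    simp only [mul_neg]
    rw [Finset.sum_neg_distrib]
    ring
  have hκw : κ ⬝ᵥ w = w ⬝ᵥ ((Matrix.of fun i j => k (x i) (x j)) *ᵥ w) + σ ^ 2 * (w ⬝ᵥ w) := by
    conv_lhs => rw [← hGw]
    rw [gramReg, Matrix.add_mulVec, add_dotProduct, Matrix.smul_mulVec,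
      Matrix.one_mulVec, smul_dotProduct, smul_eq_mul, dotProduct_comm]
  have hbb' : b ⬝ᵥ G *ᵥ b =
      w ⬝ᵥ ((Matrix.of fun i j => k (x i) (x j)) *ᵥ w) - 2 * (κ ⬝ᵥ w) + k s s := by
    have hsx : ∀ i, k (x i) s = k s (x i) := fun i => hk1 _ _
    simp only [dotProduct, mulVec, hG, hb, hu, hκ, Fintype.sum_sum_type, Matrix.of_apply,
      Sum.elim_inl, Sum.elim_inr, Pi.zero_apply, Pi.neg_apply, zero_mul, mul_zero,
      Finset.sum_const_zero, add_zero, zero_add, Finset.univ_unique, Finset.sum_singleton,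
      mul_one, mul_neg, neg_mul, neg_neg, hsx, mul_add, Finset.mul_sum, neg_add,
      Finset.sum_add_distrib, Finset.sum_neg_distrib, Finset.sum_sub_distrib, one_mul,
      two_mul]
    have hc : ∑ i : Fin t, w i * k s (x i) = ∑ i : Fin t, k s (x i) * w i :=
      Finset.sum_congr rfl fun i _ => mul_comm _ _
    rw [hc]
    ring
  have hwnn : (0:ℝ) ≤ w ⬝ᵥ w := Finset.sum_nonneg fun i _ => mul_self_nonneg _
  have hbb : b ⬝ᵥ G *ᵥ b ≤ k s s - κ ⬝ᵥ w := by
    rw [hbb']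
    nlinarith [hκw, hwnn, sq_nonneg σ, mul_nonneg (sq_nonneg σ) hwnn]
  -- conclude via Cauchy-Schwarz
  have hcs := psd_cs hGpsd a b
  have hbnn := psd_nonneg hGpsd b
  have haB : a ⬝ᵥ G *ᵥ a ≤ B ^ 2 := haa ▸ hnorm
  have h1 : (a ⬝ᵥ G *ᵥ b) ^ 2 ≤ B ^ 2 * (k s s - κ ⬝ᵥ w) :=
    le_trans hcs (mul_le_mul haB hbb hbnn (sq_nonneg B))
  rw [hmean, ← hab]
  calc |a ⬝ᵥ G *ᵥ b| = Real.sqrt ((a ⬝ᵥ G *ᵥ b) ^ 2) := (Real.sqrt_sq_eq_abs _).symm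
    _ ≤ Real.sqrt (B ^ 2 * (k s s - κ ⬝ᵥ w)) := Real.sqrt_le_sqrt h1
    _ = B * Real.sqrt (k s s - κ ⬝ᵥ w) := by
        rw [Real.sqrt_mul (sq_nonneg B), Real.sqrt_sq hB]
end

section
/- Let k be a positive semidefinite kernel on a set S, let x_1, …, x_t ∈ S and σ > 0, and define K_t, k_t(s), σ_t²(s) and the posterior mean μ_t as in the context. Suppose f : S → ℝ satisfies f(x) = Σ_{j=1}^{m} α_j k(x, z_j) for some points z_1,…,z_m ∈ S and coefficients α ∈ ℝ^m with Σ_{i,j} α_i α_j k(z_i, z_j) ≤ B². Let ε ∈ ℝᵗ be an arbitrary noise vector and set y_i = f(x_i) + ε_i for i = 1,…,t. Then for every x ∈ S, | f(x) − μ_t(x) | ≤ ( B + σ^{−1}·‖ε‖₂ ) · √(σ_t²(x)), where ‖ε‖₂ is the Euclidean norm of ε. -/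
open Matrix

lemma quadNonneg {S : Type*} (k : S → S → ℝ) (hk : IsPSDKernel k)
    {ι : Type*} [Fintype ι] (p : ι → S) (c : ι → ℝ) :
    0 ≤ ∑ i, ∑ j, c i * c j * k (p i) (p j) := by
  classical
  set e := Fintype.equivFin ι with he
  have h := (hk.2 (Fintype.card ι) (p ∘ e.symm)).dotProduct_mulVec_nonneg (c ∘ e.symm)
  simp only [star_trivial, dotProduct, mulVec, Matrix.of_apply, Function.comp_apply] at h
  have hre : (∑ i, ∑ j, c i * c j * k (p i) (p j))
      = ∑ i, (c ∘ e.symm) i * ∑ j, k (p (e.symm i)) (p (e.symm j)) * (c ∘ e.symm) j := by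
    rw [← Equiv.sum_comp e.symm (fun i => ∑ j, c i * c j * k (p i) (p j))]
    refine Finset.sum_congr rfl fun i _ => ?_
    rw [Finset.mul_sum,
      ← Equiv.sum_comp e.symm (fun j => c (e.symm i) * c j * k (p (e.symm i)) (p j))]
    exact Finset.sum_congr rfl fun j _ => by simp [Function.comp]; ring
  rw [hre]
  exact h

lemma quadCS {S : Type*} (k : S → S → ℝ) (hk : IsPSDKernel k)
    {ι : Type*} [Fintype ι] (p : ι → S) (c d : ι → ℝ) :
    (∑ i, ∑ j, c i * d j * k (p i) (p j)) ^ 2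
      ≤ (∑ i, ∑ j, c i * c j * k (p i) (p j)) * (∑ i, ∑ j, d i * d j * k (p i) (p j)) := by
  classical
  set Qcc := ∑ i, ∑ j, c i * c j * k (p i) (p j) with hQcc
  set Qdd := ∑ i, ∑ j, d i * d j * k (p i) (p j) with hQdd
  set Qcd := ∑ i, ∑ j, c i * d j * k (p i) (p j) with hQcd
  have hsymm : (∑ i, ∑ j, d i * c j * k (p i) (p j)) = Qcd := by
    rw [Finset.sum_comm, hQcd]
    exact Finset.sum_congr rfl fun i _ => Finset.sum_congr rfl fun j _ => by
      rw [hk.1 (p j) (p i)]; ring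
  have key : ∀ u : ℝ, 0 ≤ Qdd * (u * u) + (2 * Qcd) * u + Qcc := by
    intro u
    have h := quadNonneg k hk p (fun i => c i + u * d i)
    have hexp : (∑ i, ∑ j, (c i + u * d i) * (c j + u * d j) * k (p i) (p j))
        = Qcc + u * Qcd + u * (∑ i, ∑ j, d i * c j * k (p i) (p j)) + u * u * Qdd := by
      simp only [hQcc, hQcd, hQdd, Finset.mul_sum, ← Finset.sum_add_distrib]
      exact Finset.sum_congr rfl fun i _ => Finset.sum_congr rfl fun j _ => by ring
    rw [hexp, hsymm] at h
    linarith
  have hd := discrim_le_zero key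
  rw [discrim] at hd
  nlinarith [hd]

set_option maxHeartbeats 1000000 in
/-- Deterministic GP concentration: if `f` is a finite combination of
kernel sections with kernel norm at most `B` and the targets are `y_i = f(x_i) + ε_i`,
then `|f(x) − μ_t(x)| ≤ (B + σ⁻¹‖ε‖₂)·√(σ_t²(x))`. -/
theorem stmt16 {S : Type*} (k : S → S → ℝ) (hk : IsPSDKernel k)
    (σ : ℝ) (hσ : 0 < σ) (t : ℕ) (x : Fin t → S)
    (f : S → ℝ) (m : ℕ) (z : Fin m → S) (α : Fin m → ℝ) (B : ℝ) (hB : 0 ≤ B)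
    (hf : ∀ s : S, f s = ∑ j : Fin m, α j * k s (z j))
    (hnorm : ∑ i : Fin m, ∑ j : Fin m, α i * α j * k (z i) (z j) ≤ B ^ 2)
    (ε : Fin t → ℝ) (y : Fin t → ℝ) (hy : ∀ i, y i = f (x i) + ε i) :
    ∀ s : S, |f s - postMean k σ x y s|
      ≤ (B + σ⁻¹ * Real.sqrt (∑ i : Fin t, ε i ^ 2)) * Real.sqrt (postVar k σ x s) := by
  classical
  intro s
  set K : Matrix (Fin t) (Fin t) ℝ := Matrix.of fun i j => k (x i) (x j) with hKdef
  set A : Matrix (Fin t) (Fin t) ℝ := gramReg k σ x with hAdef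
  have hAeq : A = K + σ ^ 2 • 1 := rfl
  have hApd : A.PosDef := by
    rw [hAeq]
    refine Matrix.PosDef.posSemidef_add (hk.2 t x) ?_
    rw [smul_one_eq_diagonal]
    exact Matrix.posDef_diagonal_iff.mpr fun i => by positivity
  have hAdet : IsUnit A.det := hApd.det_pos.ne'.isUnit
  set v : Fin t → ℝ := kvec k x s with hv
  set w : Fin t → ℝ := A⁻¹ *ᵥ v with hw
  have hAw : A *ᵥ w = v := by
    rw [hw, mulVec_mulVec, Matrix.mul_nonsing_inv _ hAdet, one_mulVec]
  have hKsym : Kᵀ = K := by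
    ext i j; simp [hKdef, hk.1 (x j) (x i)]
  have hAsym : Aᵀ = A := by
    rw [hAeq, transpose_add, hKsym, transpose_smul, transpose_one]
  have hAinvsym : A⁻¹ᵀ = A⁻¹ := by rw [Matrix.transpose_nonsing_inv, hAsym]
  have hdot : ∀ u : Fin t → ℝ, v ⬝ᵥ (A⁻¹ *ᵥ u) = w ⬝ᵥ u := by
    intro u
    rw [Matrix.dotProduct_mulVec, ← hAinvsym, Matrix.vecMul_transpose, ← hw]
  set Sv := ∑ i, w i * k s (x i) with hSv
  set W2 := ∑ i, w i ^ 2 with hW2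
  set SK := ∑ i, ∑ j, w i * w j * k (x i) (x j) with hSK
  set Sf := ∑ i, ∑ j, w i * α j * k (x i) (z j) with hSf
  set Sε := ∑ i, w i * ε i with hSe
  have hvw : v ⬝ᵥ w = Sv := by
    simp only [dotProduct, hv, kvec, hSv]
    exact Finset.sum_congr rfl fun i _ => by ring
  have hwv : w ⬝ᵥ v = Sv := by rw [dotProduct_comm]; exact hvw
  have hww : w ⬝ᵥ w = W2 := by
    simp only [dotProduct, hW2, sq]
  have hpostVar : postVar k σ x s = k s s - Sv := by
    rw [postVar, ← hv, ← hAdef, ← hw, hvw]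
  have hKwvec : K *ᵥ w = v - σ ^ 2 • w := by
    have h2 : A *ᵥ w = K *ᵥ w + σ ^ 2 • w := by
      rw [hAeq, add_mulVec, smul_mulVec, one_mulVec]
    rw [← hAw, h2]; abel
  have hSKval : SK = Sv - σ ^ 2 * W2 := by
    have h3 : w ⬝ᵥ (K *ᵥ w) = SK := by
      simp only [dotProduct, mulVec, hKdef, Matrix.of_apply, Finset.mul_sum, hSK]
      exact Finset.sum_congr rfl fun i _ => Finset.sum_congr rfl fun j _ => by ring
    rw [← h3, hKwvec, dotProduct_sub, hwv, dotProduct_smul, smul_eq_mul, hww]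
  -- big index type
  set p : Option (Fin t ⊕ Fin m) → S := fun o => o.elim s (Sum.elim x z) with hp
  set c : Option (Fin t ⊕ Fin m) → ℝ :=
    fun o => o.elim 1 (Sum.elim (fun i => -w i) (fun _ => 0)) with hc
  set d : Option (Fin t ⊕ Fin m) → ℝ :=
    fun o => o.elim 0 (Sum.elim (fun _ => 0) α) with hd
  have hQcc : (∑ i, ∑ j, c i * c j * k (p i) (p j)) = k s s - 2 * Sv + SK := by
    simp only [hp, hc, Fintype.sum_option, Fintype.sum_sum_type, Option.elim,
      Sum.elim_inl, Sum.elim_inr, one_mul, mul_one, zero_mul, mul_zero,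
      Finset.sum_const_zero, add_zero, zero_add, neg_mul, mul_neg, neg_neg,
      Finset.sum_neg_distrib, Finset.sum_add_distrib]
    rw [show (∑ i, w i * k (x i) s) = Sv from
      Finset.sum_congr rfl fun i _ => by rw [hk.1 (x i) s], ← hSv, ← hSK]
    ring
  have hQcd : (∑ i, ∑ j, c i * d j * k (p i) (p j)) = f s - Sf := by
    simp only [hp, hc, hd, Fintype.sum_option, Fintype.sum_sum_type, Option.elim,
      Sum.elim_inl, Sum.elim_inr, one_mul, mul_one, zero_mul, mul_zero,
      Finset.sum_const_zero, add_zero, zero_add, neg_mul, mul_neg, neg_neg,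
      Finset.sum_neg_distrib, Finset.sum_add_distrib]
    rw [← hf s, ← hSf]
    ring
  have hQdd : (∑ i, ∑ j, d i * d j * k (p i) (p j))
      = ∑ i, ∑ j, α i * α j * k (z i) (z j) := by
    simp only [hp, hd, Fintype.sum_option, Fintype.sum_sum_type, Option.elim,
      Sum.elim_inl, Sum.elim_inr, one_mul, mul_one, zero_mul, mul_zero,
      Finset.sum_const_zero, add_zero, zero_add]
  have hQdd0 : 0 ≤ ∑ i : Fin m, ∑ j : Fin m, α i * α j * k (z i) (z j) :=
    quadNonneg k hk z α
  have hQ0 : 0 ≤ k s s - 2 * Sv + SK := hQcc ▸ quadNonneg k hk p c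
  have hCS := quadCS k hk p c d
  rw [hQcc, hQcd, hQdd] at hCS
  -- basic variance facts
  have hW20 : 0 ≤ W2 := by
    rw [hW2]; positivity
  have hσW : σ ^ 2 * W2 ≤ postVar k σ x s := by
    rw [hpostVar]; linarith [hQ0, hSKval.symm.le, hSKval.le]
  have hpV0 : 0 ≤ postVar k σ x s := by
    have : 0 ≤ σ ^ 2 * W2 := mul_nonneg (sq_nonneg σ) hW20
    linarith
  have hQcc_le : k s s - 2 * Sv + SK ≤ postVar k σ x s := by
    have : 0 ≤ σ ^ 2 * W2 := mul_nonneg (sq_nonneg σ) hW20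
    rw [hpostVar]; linarith [hSKval.le, hSKval.symm.le]
  have h1 : (f s - Sf) ^ 2 ≤ postVar k σ x s * B ^ 2 :=
    hCS.trans (mul_le_mul hQcc_le hnorm hQdd0 hpV0)
  have habs1 : |f s - Sf| ≤ B * Real.sqrt (postVar k σ x s) := by
    have h := Real.sqrt_le_sqrt h1
    rw [Real.sqrt_sq_eq_abs, Real.sqrt_mul hpV0, Real.sqrt_sq hB] at h
    linarith [h]
  have h2 : Sε ^ 2 ≤ W2 * (∑ i, ε i ^ 2) := by
    rw [hSe, hW2]
    exact Finset.sum_mul_sq_le_sq_mul_sq Finset.univ w ε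
  have habs2 : |Sε| ≤ (σ⁻¹ * Real.sqrt (∑ i, ε i ^ 2)) * Real.sqrt (postVar k σ x s) := by
    have hs := Real.sqrt_le_sqrt h2
    rw [Real.sqrt_sq_eq_abs, Real.sqrt_mul hW20] at hs
    have hsw : Real.sqrt W2 ≤ σ⁻¹ * Real.sqrt (postVar k σ x s) := by
      have hle : W2 ≤ σ⁻¹ ^ 2 * postVar k σ x s := by
        have h0 : W2 = σ⁻¹ ^ 2 * (σ ^ 2 * W2) := by
          field_simp
        rw [h0]
        exact mul_le_mul_of_nonneg_left hσW (by positivity)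
      calc Real.sqrt W2 ≤ Real.sqrt (σ⁻¹ ^ 2 * postVar k σ x s) := Real.sqrt_le_sqrt hle
        _ = σ⁻¹ * Real.sqrt (postVar k σ x s) := by
            rw [Real.sqrt_mul (by positivity), Real.sqrt_sq (by positivity)]
    calc |Sε| ≤ Real.sqrt W2 * Real.sqrt (∑ i, ε i ^ 2) := hs
      _ ≤ (σ⁻¹ * Real.sqrt (postVar k σ x s)) * Real.sqrt (∑ i, ε i ^ 2) :=
          mul_le_mul_of_nonneg_right hsw (Real.sqrt_nonneg _)
      _ = (σ⁻¹ * Real.sqrt (∑ i, ε i ^ 2)) * Real.sqrt (postVar k σ x s) := by ring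
  have hμ : postMean k σ x y s = Sf + Sε := by
    rw [postMean, ← hv, ← hAdef, hdot y]
    have hyfun : y = fun i => f (x i) + ε i := funext hy
    rw [hyfun]
    simp only [dotProduct]
    rw [hSf, hSe, ← Finset.sum_add_distrib]
    refine Finset.sum_congr rfl fun i _ => ?_
    rw [hf (x i), mul_add, Finset.mul_sum]
    refine congrArg₂ (· + ·) (Finset.sum_congr rfl fun j _ => by ring) rfl
  calc |f s - postMean k σ x y s| = |(f s - Sf) - Sε| := by rw [hμ]; congr 1; ring
    _ ≤ |f s - Sf| + |Sε| := by
        rw [sub_eq_add_neg]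
        exact (abs_add_le _ _).trans (by rw [abs_neg])
    _ ≤ B * Real.sqrt (postVar k σ x s)
        + (σ⁻¹ * Real.sqrt (∑ i, ε i ^ 2)) * Real.sqrt (postVar k σ x s) :=
          add_le_add habs1 habs2
    _ = (B + σ⁻¹ * Real.sqrt (∑ i : Fin t, ε i ^ 2)) * Real.sqrt (postVar k σ x s) := by ring
end

section
/- Let k be a positive semidefinite kernel on a set S, let x_1, …, x_t ∈ S and σ > 0, and define K_t, k_t(s) and σ_t²(s) as in the context. Then for every x ∈ S, k_t(x)ᵀ (K_t + σ² I_t)⁻² k_t(x) ≤ σ^{−2} · σ_t²(x). -/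
open Matrix

/-- The regularized Gram matrix is positive definite. -/
lemma gramReg_posDef {S : Type*} (k : S → S → ℝ) (hk : IsPSDKernel k)
    (σ : ℝ) (hσ : 0 < σ) {t : ℕ} (x : Fin t → S) : (gramReg k σ x).PosDef := by
  have hK : (Matrix.of fun i j => k (x i) (x j)).PosSemidef := hk.2 t x
  rw [Matrix.posDef_iff_dotProduct_mulVec]
  constructor
  · exact hK.1.add (by simp [Matrix.IsHermitian, Matrix.conjTranspose_smul])
  · intro y hy
    have h1 : 0 ≤ star y ⬝ᵥ ((Matrix.of fun i j => k (x i) (x j)) *ᵥ y) := hK.dotProduct_mulVec_nonneg y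
    have h2 : 0 < star y ⬝ᵥ y := Matrix.dotProduct_star_self_pos_iff.mpr hy
    have hmv : gramReg k σ x *ᵥ y = (Matrix.of fun i j => k (x i) (x j)) *ᵥ y + σ ^ 2 • y := by
      simp [gramReg, Matrix.add_mulVec, Matrix.smul_mulVec]
    rw [hmv, dotProduct_add, dotProduct_smul]
    have h3 : 0 < σ ^ 2 * (star y ⬝ᵥ y) := by positivity
    simp only [smul_eq_mul]
    linarith

/-- The key Gram-matrix inequality from PSD-ness of the `(t+1)`-point Gram matrix. -/
lemma gram_quad_ineq {S : Type*} (k : S → S → ℝ) (hk : IsPSDKernel k)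
    {t : ℕ} (x : Fin t → S) (s : S) (w : Fin t → ℝ) :
    0 ≤ k s s - 2 * (kvec k x s ⬝ᵥ w)
        + w ⬝ᵥ ((Matrix.of fun i j => k (x i) (x j)) *ᵥ w) := by
  have h := (hk.2 (t + 1) (Fin.cons s x)).dotProduct_mulVec_nonneg (Fin.cons 1 (fun i => -w i))
  simp only [star_trivial] at h
  calc 0 ≤ _ := h
    _ = _ := by
      simp only [kvec, dotProduct, Matrix.mulVec, Fin.sum_univ_succ, Fin.cons_zero,
        Fin.cons_succ, Matrix.of_apply, show ∀ i, k (x i) s = k s (x i) from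
          fun i => hk.1 (x i) s]
      rw [Finset.mul_sum]
      simp only [Finset.sum_add_distrib, mul_add, Finset.mul_sum, Finset.sum_sub_distrib,
        mul_neg, neg_mul, Finset.sum_neg_distrib, mul_one, one_mul, neg_neg, mul_comm]
      ring_nf
      rw [Finset.sum_mul]
      ring

/-- Quadratic-form bound controlling the noise contribution:
`k_t(x)ᵀ(K_t+σ²I)⁻² k_t(x) ≤ σ⁻²·σ_t²(x)`. -/
theorem stmt17 {S : Type*} (k : S → S → ℝ) (hk : IsPSDKernel k)
    (σ : ℝ) (hσ : 0 < σ) (t : ℕ) (x : Fin t → S) :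
    ∀ s : S,
      kvec k x s ⬝ᵥ (((gramReg k σ x)⁻¹ * (gramReg k σ x)⁻¹) *ᵥ kvec k x s)
        ≤ (σ ^ 2)⁻¹ * postVar k σ x s := by
  intro s
  set A := gramReg k σ x with hAdef
  set K : Matrix (Fin t) (Fin t) ℝ := Matrix.of fun i j => k (x i) (x j) with hKdef
  set v := kvec k x s with hvdef
  set w := A⁻¹ *ᵥ v with hwdef
  have hApd : A.PosDef := gramReg_posDef k hk σ hσ x
  -- LHS equals w ⬝ᵥ w
  have hLHS : v ⬝ᵥ ((A⁻¹ * A⁻¹) *ᵥ v) = w ⬝ᵥ w := by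
    have hH : A⁻¹ᵀ = A⁻¹ := by
      rw [← Matrix.conjTranspose_eq_transpose_of_trivial]; exact hApd.1.inv
    rw [← Matrix.mulVec_mulVec, Matrix.dotProduct_mulVec, ← Matrix.mulVec_transpose, hH, hwdef]
  -- A *ᵥ w = v
  have hAw : A *ᵥ w = v := by
    rw [hwdef, Matrix.mulVec_mulVec, Matrix.mul_nonsing_inv _ hApd.det_pos.ne'.isUnit,
      Matrix.one_mulVec]
  -- v ⬝ᵥ w = w ⬝ᵥ K w + σ² (w ⬝ᵥ w)
  have hvw : v ⬝ᵥ w = w ⬝ᵥ (K *ᵥ w) + σ ^ 2 * (w ⬝ᵥ w) := by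
    have h1 : A *ᵥ w = K *ᵥ w + σ ^ 2 • w := by
      simp [hAdef, gramReg, Matrix.add_mulVec, Matrix.smul_mulVec, hKdef]
    calc v ⬝ᵥ w = w ⬝ᵥ (A *ᵥ w) := by rw [← hAw]; exact dotProduct_comm _ _
      _ = w ⬝ᵥ (K *ᵥ w) + σ ^ 2 * (w ⬝ᵥ w) := by
          rw [h1, dotProduct_add, dotProduct_smul]; rfl
  have hquad := gram_quad_ineq k hk x s w
  rw [← hvdef, ← hKdef] at hquad
  have hww : 0 ≤ w ⬝ᵥ w := Finset.sum_nonneg fun i _ => mul_self_nonneg _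
  have hσ2 : 0 < σ ^ 2 := by positivity
  have hkey : σ ^ 2 * (w ⬝ᵥ w) ≤ k s s - v ⬝ᵥ w := by linarith
  rw [hLHS]
  have : postVar k σ x s = k s s - v ⬝ᵥ w := rfl
  rw [this]
  calc w ⬝ᵥ w = (σ ^ 2)⁻¹ * (σ ^ 2 * (w ⬝ᵥ w)) := by field_simp
    _ ≤ (σ ^ 2)⁻¹ * (k s s - v ⬝ᵥ w) := by
        exact mul_le_mul_of_nonneg_left hkey (by positivity)
end
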